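/- Any quasi-increasing sequence V₁,…,V_m of subspaces of a finite-dimensional vector space over a field is coordinated: there exists a linearly independent subset X of the ambient space such that for every i, X ∩ V_i spans V_i. -/

import Mathlib

open Submodule Set

theorem quasiIncreasing_coordinated_aux {𝔽 U : Type*} [Field 𝔽] [AddCommGroup U] [Module 𝔽 U] :
    ∀ (m : ℕ) (V : Fin m → Submodule 𝔽 U),
      (∀ r : Fin m, V r ⊓ (⨆ i, ⨆ _ : i < r, V i) ≤ ⨆ i, ⨆ _ : i < r ∧ V i ≤ V r, V i) →
      ∃ X : Set U, LinearIndependent 𝔽 (fun x : X => (x : U)) ∧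
        (∀ i, Submodule.span 𝔽 (X ∩ (V i : Set U)) = V i) ∧ X ⊆ ↑(⨆ i, V i) := by
  intro m
  induction m with
  | zero =>
    intro V _
    exact ⟨∅, linearIndependent_empty _ _, fun i => i.elim0, by simp⟩
  | succ m ih =>
    intro V hqi
    obtain ⟨X, hXind, hXspan, hXsub⟩ := ih (fun i => V i.castSucc) (by
      intro r
      have h := hqi r.castSucc
      have h1 : (⨆ i : Fin m, ⨆ _ : i < r, V i.castSucc)
          ≤ ⨆ i : Fin (m+1), ⨆ _ : i < r.castSucc, V i := by
        refine iSup₂_le fun i hi => ?_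
        exact le_iSup₂ (f := fun i (_ : i < r.castSucc) => V i) i.castSucc
          (by simpa using hi)
      have h2 : (⨆ i : Fin (m+1), ⨆ _ : i < r.castSucc ∧ V i ≤ V r.castSucc, V i)
          ≤ ⨆ i : Fin m, ⨆ _ : i < r ∧ V i.castSucc ≤ V r.castSucc, V i.castSucc := by
        refine iSup₂_le fun i hi => ?_
        have hi1 : (i : ℕ) < m := lt_of_lt_of_le hi.1 (by simp [Fin.le_def, r.isLt.le])
        set j : Fin m := ⟨i, hi1⟩ with hj
        have hji : j.castSucc = i := by ext; simp [hj]
        refine le_trans (le_of_eq (by rw [hji]))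
          (le_iSup₂ (f := fun i (_ : i < r ∧ V i.castSucc ≤ V r.castSucc) => V i.castSucc) j ?_)
        constructor
        · rw [Fin.lt_def] at hi ⊢; simpa [hj] using hi.1
        · rw [hji]; exact hi.2
      calc V r.castSucc ⊓ (⨆ i : Fin m, ⨆ _ : i < r, V i.castSucc)
          ≤ V r.castSucc ⊓ (⨆ i : Fin (m+1), ⨆ _ : i < r.castSucc, V i) :=
            inf_le_inf_left _ h1
        _ ≤ _ := le_trans h h2)
    set L : Fin (m+1) := Fin.last m with hL
    set P : Submodule 𝔽 U := ⨆ i : Fin m, V i.castSucc with hP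
    set W : Submodule 𝔽 U := ⨆ i : Fin (m+1), ⨆ _ : i < L ∧ V i ≤ V L, V i with hW
    have hWle : W ≤ V L := iSup₂_le fun i hi => hi.2
    have hWspan : W ≤ span 𝔽 (X ∩ (V L : Set U)) := by
      refine iSup₂_le fun i hi => ?_
      have hi1 : (i : ℕ) < m := hi.1
      set j : Fin m := ⟨i, hi1⟩ with hj
      have hji : j.castSucc = i := by ext; simp [hj]
      have := hXspan j
      rw [hji] at this
      rw [← this]
      exact span_mono (inter_subset_inter_right _ (fun x hx => hi.2 hx))
    have hPW : P ⊓ V L ≤ W := by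
      have hP1 : P ≤ ⨆ i : Fin (m+1), ⨆ _ : i < L, V i :=
        iSup_le fun j => le_iSup₂ (f := fun i (_ : i < L) => V i) j.castSucc
          (Fin.castSucc_lt_last j)
      calc P ⊓ V L ≤ (⨆ i : Fin (m+1), ⨆ _ : i < L, V i) ⊓ V L := inf_le_inf_right _ hP1
        _ = V L ⊓ (⨆ i : Fin (m+1), ⨆ _ : i < L, V i) := inf_comm _ _
        _ ≤ W := hqi L
    have hspanX : span 𝔽 X ≤ P := span_le.2 hXsub
    obtain ⟨B, hBt, hXB, htB, hBind⟩ :=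
      exists_linearIndepOn_id_extension hXind (Set.subset_union_left (s := X) (t := (V L : Set U)))
    refine ⟨B, hBind, ?_, ?_⟩
    · intro i
      induction i using Fin.lastCases with
      | cast i =>
        refine le_antisymm (span_le.2 (inter_subset_right)) ?_
        exact le_trans (le_of_eq (hXspan i).symm) (span_mono (inter_subset_inter_left _ hXB))
      | last =>
        refine le_antisymm (span_le.2 (inter_subset_right)) ?_
        intro v hv
        set S : Submodule 𝔽 U := span 𝔽 (B ∩ (V L : Set U)) with hS
        have hSle : S ≤ V L := span_le.2 inter_subset_right
        have hBsub : B ⊆ X ∪ (B ∩ (V L : Set U)) := by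
          intro b hb
          rcases hBt hb with h | h
          · exact Or.inl h
          · exact Or.inr ⟨hb, h⟩
        have hvB : v ∈ span 𝔽 B := htB (Or.inr hv)
        have hvXS : v ∈ span 𝔽 X ⊔ S := by
          refine (span_le.2 ?_ : span 𝔽 B ≤ span 𝔽 X ⊔ S) hvB
          intro b hb
          rcases hBsub hb with h | h
          · exact le_sup_left (α := Submodule 𝔽 U) (subset_span h)
          · exact le_sup_right (α := Submodule 𝔽 U) (subset_span h)
        rw [Submodule.mem_sup] at hvXS
        obtain ⟨p, hp, s, hs, rfl⟩ := hvXS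
        have hpV : p ∈ V L := by
          rw [(add_sub_cancel_right p s).symm]
          exact sub_mem hv (hSle hs)
        have hpW : p ∈ W := hPW ⟨hspanX hp, hpV⟩
        have hpS : p ∈ S := by
          refine (le_trans hWspan (span_mono (inter_subset_inter_left _ hXB))) hpW
        exact add_mem hpS hs
    · intro x hx
      rcases hBt hx with h | h
      · exact (iSup_le fun j : Fin m => le_iSup V j.castSucc : P ≤ ⨆ i, V i) (hXsub h)
      · exact Submodule.mem_iSup_of_mem L h

/-- Any quasi-increasing sequence `V₁, …, V_m` of subspaces of a
finite-dimensional vector space is coordinated: there is a linearly independent subset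
`X` of the ambient space such that `X ∩ V_i` spans `V_i` for every `i`.
Quasi-increasing means that for every `r`,
`V_r ∩ (V₁ + ⋯ + V_{r-1}) ⊆ Σ_{i < r, V_i ⊆ V_r} V_i`. -/
theorem quasiIncreasing_coordinated {𝔽 U : Type*} [Field 𝔽] [AddCommGroup U] [Module 𝔽 U]
    [FiniteDimensional 𝔽 U] {m : ℕ} (V : Fin m → Submodule 𝔽 U)
    (hqi : ∀ r : Fin m,
      V r ⊓ (⨆ i, ⨆ _ : i < r, V i) ≤ ⨆ i, ⨆ _ : i < r ∧ V i ≤ V r, V i) :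
    ∃ X : Set U, LinearIndependent 𝔽 (fun x : X => (x : U)) ∧
      ∀ i, Submodule.span 𝔽 (X ∩ (V i : Set U)) = V i := by
  obtain ⟨X, h1, h2, _⟩ := quasiIncreasing_coordinated_aux m V hqi
  exact ⟨X, h1, h2⟩
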